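/- Let S be a finite semigroup and ρ a congruence on S such that S/ρ is Mal'cev nilpotent. Then η* ⊆ ρ. Consequently, η* is the smallest congruence on S whose quotient semigroup is Mal'cev nilpotent. -/

import Mathlib

/-! Common definitions: Mal'cev nilpotency, the relations η_n, η, the congruence η*,
Rees matrix semigroups (with and without zero), regularity, CS-diagonality,
the row relation ~, ideals, principal series and Rees factor isomorphisms. -/

/-- The pair `(λ_n, ρ_n)` of Mal'cev words in a monoid, with `λ₀ = x`, `ρ₀ = y`,
`λ_{k+1} = λ_k * z (k+1) * ρ_k` and `ρ_{k+1} = ρ_k * z (k+1) * λ_k`. -/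
def malcev {M : Type*} [Monoid M] (x y : M) (z : ℕ → M) : ℕ → M × M
  | 0 => (x, y)
  | k + 1 =>
      ((malcev x y z k).1 * z (k + 1) * (malcev x y z k).2,
       (malcev x y z k).2 * z (k + 1) * (malcev x y z k).1)

/-- A semigroup `S` is Mal'cev nilpotent if for some positive `n`,
`λ_n(a,b,c₁,…,c_n) = ρ_n(a,b,c₁,…,c_n)` for all `a b ∈ S` and all `cᵢ ∈ S¹`,
where `S¹ = WithOne S`. -/
def MalcevNilpotent (S : Type*) [Semigroup S] : Prop :=
  ∃ n : ℕ, 0 < n ∧ ∀ (a b : S) (z : ℕ → WithOne S),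
    (malcev (a : WithOne S) (b : WithOne S) z n).1 =
    (malcev (a : WithOne S) (b : WithOne S) z n).2

/-- The relation `η_n` on a semigroup `S`: `η₁` is the diagonal, and for `n > 1`,
`x η_n y` iff there are `z₁, …, z_n ∈ S¹` with `x = λ_n(x,y,z₁,…,z_n)` and
`y = ρ_n(x,y,z₁,…,z_n)`. -/
def etaN (S : Type*) [Semigroup S] (n : ℕ) (x y : S) : Prop :=
  (n = 1 ∧ x = y) ∨
  (1 < n ∧ ∃ z : ℕ → WithOne S,
    (x : WithOne S) = (malcev (x : WithOne S) (y : WithOne S) z n).1 ∧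
    (y : WithOne S) = (malcev (x : WithOne S) (y : WithOne S) z n).2)

/-- `η`, the transitive closure of the union of the relations `η_n`, `n ≥ 1`. -/
def eta (S : Type*) [Semigroup S] : S → S → Prop :=
  Relation.TransGen (fun x y => ∃ n, 1 ≤ n ∧ etaN S n x y)

/-- `η*`, the smallest congruence on `S` containing `η`. -/
def etaStar (S : Type*) [Semigroup S] : Con S :=
  conGen (eta S)

/-- A semigroup is an inverse semigroup if every element has exactly one inverse. -/
def IsInverseSemigroup (S : Type*) [Semigroup S] : Prop :=
  ∀ x : S, ∃! y : S, x * y * x = x ∧ y * x * y = y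

/-- A semigroup is completely regular if every element lies in a subgroup:
for every `a` there is `b` with `aba = a`, `ab = ba` and `bab = b`. -/
def IsCompletelyRegular (S : Type*) [Semigroup S] : Prop :=
  ∀ a : S, ∃ b : S, a * b * a = a ∧ a * b = b * a ∧ b * a * b = b

/-- A (possibly empty) two-sided ideal of a semigroup. -/
def IsIdeal (S : Type*) [Semigroup S] (I : Set S) : Prop :=
  ∀ s : S, ∀ x ∈ I, s * x ∈ I ∧ x * s ∈ I

/-- The Rees matrix semigroup `M⁰(G, n, m; P)` with zero `theta`; the sandwich
matrix entry `P j i : Option G` is `none` when the entry is `θ`. -/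
inductive ReesMatrix (G : Type*) (n m : ℕ) (P : Fin m → Fin n → Option G) where
  | theta : ReesMatrix G n m P
  | elem (g : G) (i : Fin n) (j : Fin m) : ReesMatrix G n m P

namespace ReesMatrix

variable {G : Type*} [Group G] {n m : ℕ} {P : Fin m → Fin n → Option G}

/-- Multiplication: `(g;i,j)(h;k,l) = (g p_{j,k} h; i, l)` if `p_{j,k} ≠ θ`,
and all other products are `θ`. -/
def mul : ReesMatrix G n m P → ReesMatrix G n m P → ReesMatrix G n m P
  | elem g i j, elem h k l =>
      match P j k with
      | some p => elem (g * p * h) i l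
      | none => theta
  | _, _ => theta

instance : Semigroup (ReesMatrix G n m P) where
  mul := mul
  mul_assoc a b c := by
    show mul (mul a b) c = mul a (mul b c)
    rcases a with _ | ⟨g, i, j⟩ <;> rcases b with _ | ⟨h, k, l⟩ <;>
      rcases c with _ | ⟨f, r, s⟩
    all_goals try rfl
    · rcases hjk : P j k with _ | p <;> simp [mul, hjk]
    · rcases hjk : P j k with _ | p <;> rcases hlr : P l r with _ | q <;>
        simp [mul, hjk, hlr, mul_assoc]

theorem mul_def (a b : ReesMatrix G n m P) : a * b = mul a b := rfl

instance [Finite G] : Finite (ReesMatrix G n m P) := by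
  have := Fintype.ofFinite G
  exact Finite.of_surjective
    (fun x : Option (G × Fin n × Fin m) =>
      match x with
      | none => (theta : ReesMatrix G n m P)
      | some (g, i, j) => elem g i j)
    (by rintro (_ | ⟨g, i, j⟩)
        · exact ⟨none, rfl⟩
        · exact ⟨some (g, i, j), rfl⟩)

end ReesMatrix

/-- `P` is regular: every row and every column of the sandwich matrix has a
nonzero entry. -/
def IsRegularSandwich {G : Type*} {n m : ℕ} (P : Fin m → Fin n → Option G) : Prop :=
  (∀ i : Fin n, ∃ j : Fin m, P j i ≠ none) ∧ (∀ j : Fin m, ∃ i : Fin n, P j i ≠ none)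

/-- `P` is CS-diagonal: whenever `p_{r,t}`, `p_{r',t}` and `p_{r,t'}` are all
nonzero, so is `p_{r',t'}`. -/
def IsCSDiagonal {G : Type*} {n m : ℕ} (P : Fin m → Fin n → Option G) : Prop :=
  ∀ (r r' : Fin m) (t t' : Fin n),
    P r t ≠ none → P r' t ≠ none → P r t' ≠ none → P r' t' ≠ none

/-- The relation `~` on rows: `i ~ i'` iff some column `j` has `p_{j,i} ≠ θ`
and `p_{j,i'} ≠ θ`. -/
def rowRel {G : Type*} {n m : ℕ} (P : Fin m → Fin n → Option G) (i i' : Fin n) : Prop :=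
  ∃ j : Fin m, P j i ≠ none ∧ P j i' ≠ none

/-- The completely simple Rees matrix semigroup `M(G, n, m; P)` (without zero),
all sandwich entries lying in `G`. -/
inductive ReesMatrixCS (G : Type*) (n m : ℕ) (P : Fin m → Fin n → G) where
  | elem (g : G) (i : Fin n) (j : Fin m) : ReesMatrixCS G n m P

namespace ReesMatrixCS

variable {G : Type*} [Group G] {n m : ℕ} {P : Fin m → Fin n → G}

instance : Semigroup (ReesMatrixCS G n m P) where
  mul a b := match a, b with
    | elem g i j, elem h k l => elem (g * P j k * h) i l
  mul_assoc a b c := by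
    rcases a with ⟨g, i, j⟩; rcases b with ⟨h, k, l⟩; rcases c with ⟨f, r, s⟩
    show elem _ _ _ = elem _ _ _
    simp [mul_assoc]

instance [Finite G] : Finite (ReesMatrixCS G n m P) := by
  have := Fintype.ofFinite G
  exact Finite.of_surjective
    (fun x : G × Fin n × Fin m => elem x.1 x.2.1 x.2.2)
    (by rintro ⟨g, i, j⟩; exact ⟨(g, i, j), rfl⟩)

end ReesMatrixCS

/-- A principal series of a finite semigroup `S`:
`S = C 1 ⊃ C 2 ⊃ … ⊃ C o ⊃ C (o+1) = ∅`, each `C p` an ideal of `S` with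
no ideal of `S` strictly between consecutive terms. -/
structure PrincipalSeries (S : Type*) [Semigroup S] where
  o : ℕ
  ho : 1 ≤ o
  C : ℕ → Set S
  first : C 1 = Set.univ
  last : C (o + 1) = ∅
  isIdeal : ∀ p, 1 ≤ p → p ≤ o → IsIdeal S (C p)
  strict : ∀ p, 1 ≤ p → p ≤ o → C (p + 1) ⊂ C p
  max : ∀ p, 1 ≤ p → p ≤ o → ∀ I : Set S, IsIdeal S I →
    C (p + 1) ⊆ I → I ⊆ C p → I = C (p + 1) ∨ I = C p

/-- `f` realises the Rees factor `A/B` (the Rees quotient of `A` by the ideal `B`;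
if `B = ∅` the factor is `A` itself) as the Rees matrix semigroup with zero
`M⁰(H, n', m'; Q)`. -/
def IsReesFactorM0 {S : Type*} [Semigroup S] (A B : Set S)
    {H : Type*} [Group H] {n' m' : ℕ} (Q : Fin m' → Fin n' → Option H)
    (f : S → ReesMatrix H n' m' Q) : Prop :=
  (∀ x ∈ A, ∀ y ∈ A, f (x * y) = f x * f y) ∧
  ((B = ∅ ∧ Set.BijOn f A Set.univ) ∨
   (B ≠ ∅ ∧ (∀ x ∈ B, f x = ReesMatrix.theta) ∧
     (∀ x ∈ A \ B, f x ≠ ReesMatrix.theta) ∧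
     Set.InjOn f (A \ B) ∧
     (∀ w : ReesMatrix H n' m' Q, w ≠ ReesMatrix.theta → ∃ x ∈ A \ B, f x = w)))

/-- `f` realises `A` as the completely simple Rees matrix semigroup
`M(H, n', m'; Q)` (without zero). -/
def IsReesFactorCS {S : Type*} [Semigroup S] (A : Set S)
    {H : Type*} [Group H] {n' m' : ℕ} (Q : Fin m' → Fin n' → H)
    (f : S → ReesMatrixCS H n' m' Q) : Prop :=
  (∀ x ∈ A, ∀ y ∈ A, f (x * y) = f x * f y) ∧ Set.BijOn f A Set.univ

section MalcevAux

variable {M : Type*} [Monoid M]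

theorem malcev_congr (x y : M) {z w : ℕ → M} {k : ℕ}
    (h : ∀ i, 1 ≤ i → i ≤ k → z i = w i) : malcev x y z k = malcev x y w k := by
  induction k with
  | zero => rfl
  | succ k ih =>
    have ih' := ih (fun i h1 h2 => h i h1 (Nat.le_succ_of_le h2))
    simp [malcev, ih', h (k + 1) (by omega) le_rfl]

theorem malcev_add (x y : M) (z : ℕ → M) (k l : ℕ) :
    malcev x y z (k + l) =
      malcev (malcev x y z k).1 (malcev x y z k).2 (fun i => z (k + i)) l := by
  induction l with
  | zero => rfl
  | succ l ih =>
    show malcev x y z ((k + l) + 1) = _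
    simp only [malcev, ih]
    rfl

theorem malcev_map {N : Type*} [Monoid N] (F : M →* N) (x y : M) (z : ℕ → M) (k : ℕ) :
    malcev (F x) (F y) (fun i => F (z i)) k =
      (F (malcev x y z k).1, F (malcev x y z k).2) := by
  induction k with
  | zero => rfl
  | succ k ih => simp [malcev, ih]

theorem malcev_eq_propagate (x y : M) (z : ℕ → M) {k k' : ℕ} (hk : k ≤ k')
    (h : (malcev x y z k).1 = (malcev x y z k).2) :
    (malcev x y z k').1 = (malcev x y z k').2 := by
  induction k' with
  | zero => obtain rfl := Nat.le_zero.mp hk; exact h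
  | succ k' ih =>
    rcases Nat.lt_or_ge k (k' + 1) with h1 | h2
    · have h2 := ih (by omega)
      simp [malcev, h2]
    · obtain rfl : k = k' + 1 := le_antisymm hk h2
      exact h

/-- Periodic extension of `z` with period `m`, using values `z 1, …, z m`. -/
def perExt (m : ℕ) (z : ℕ → M) : ℕ → M := fun i => z ((i - 1) % m + 1)

theorem perExt_eq (m : ℕ) (z : ℕ → M) {i : ℕ} (h1 : 1 ≤ i) (h2 : i ≤ m) :
    perExt m z i = z i := by
  unfold perExt
  congr 1
  have : (i - 1) % m = i - 1 := Nat.mod_eq_of_lt (by omega)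
  omega

theorem perExt_shift (m : ℕ) (z : ℕ → M) (j i : ℕ) (h1 : 1 ≤ i) :
    perExt m z (j * m + i) = perExt m z i := by
  unfold perExt
  congr 2
  have : j * m + i - 1 = (i - 1) + j * m := by omega
  rw [this, Nat.add_mul_mod_self_right]

theorem malcev_perExt (x y : M) (z : ℕ → M) (m : ℕ) (hm : 1 ≤ m)
    (hx : malcev x y z m = (x, y)) :
    ∀ j, malcev x y (perExt m z) (j * m) = (x, y) := by
  intro j
  induction j with
  | zero => rw [Nat.zero_mul]; exact rfl
  | succ j ih =>
    have hsplit : (j + 1) * m = j * m + m := by ring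
    rw [hsplit, malcev_add, ih]
    have : malcev (x, y).1 (x, y).2 (fun i => perExt m z (j * m + i)) m
        = malcev x y z m := by
      refine malcev_congr x y (fun i hi1 hi2 => ?_)
      rw [perExt_shift m z j i hi1, perExt_eq m z hi1 hi2]
    rw [this, hx]

end MalcevAux

section EtaAux

variable {S : Type*} [Semigroup S]

theorem coe_mul_coe_withOne (u v : S) (w : WithOne S) :
    ∃ t : S, (u : WithOne S) * w * v = (t : WithOne S) := by
  induction w using WithOne.recOneCoe with
  | one => exact ⟨u * v, by rw [mul_one, WithOne.coe_mul]⟩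
  | coe s => exact ⟨u * s * v, by rw [WithOne.coe_mul, WithOne.coe_mul]⟩

theorem malcev_coe (a b : S) (z : ℕ → WithOne S) (k : ℕ) :
    ∃ a' b' : S, malcev (a : WithOne S) (b : WithOne S) z k = ((a' : WithOne S), (b' : WithOne S)) := by
  induction k with
  | zero => exact ⟨a, b, rfl⟩
  | succ k ih =>
    obtain ⟨a', b', hab⟩ := ih
    obtain ⟨t, ht⟩ := coe_mul_coe_withOne a' b' (z (k + 1))
    obtain ⟨t', ht'⟩ := coe_mul_coe_withOne b' a' (z (k + 1))
    refine ⟨t, t', ?_⟩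
    simp only [malcev, hab]
    rw [ht, ht']

/-- The natural multiplicative map `S →ₙ* c.Quotient`. -/
def conMulHom (c : Con S) : S →ₙ* c.Quotient :=
  ⟨fun s => (s : c.Quotient), fun a b => (c.coe_mul a b)⟩

theorem con_of_etaN (c : Con S) (h : MalcevNilpotent c.Quotient)
    {m : ℕ} {x y : S} (hxy : etaN S m x y) : c x y := by
  obtain ⟨n, hn, hnil⟩ := h
  rcases hxy with ⟨-, rfl⟩ | ⟨hm, z, hl, hr⟩
  · exact c.refl x
  · set F := WithOne.mapMulHom (conMulHom c) with hF
    set X : c.Quotient := (x : c.Quotient)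
    set Y : c.Quotient := (y : c.Quotient)
    have hFx : F (x : WithOne S) = (X : WithOne c.Quotient) := WithOne.mapMulHom_coe _ _
    have hFy : F (y : WithOne S) = (Y : WithOne c.Quotient) := WithOne.mapMulHom_coe _ _
    have hmap := malcev_map F (x : WithOne S) (y : WithOne S) z m
    rw [hFx, hFy] at hmap
    have hfix : malcev (X : WithOne c.Quotient) (Y : WithOne c.Quotient)
        (fun i => F (z i)) m = ((X : WithOne c.Quotient), (Y : WithOne c.Quotient)) := by
      rw [hmap, ← hl, ← hr, hFx, hFy]
    have hpump := malcev_perExt _ _ _ m (by omega) hfix n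
    have hnm : n ≤ n * m := Nat.le_mul_of_pos_right n (by omega)
    have hsplit : n * m = (n * m - n) + n := by omega
    rw [hsplit, malcev_add] at hpump
    obtain ⟨A, B, hAB⟩ := malcev_coe X Y (perExt m fun i => F (z i)) (n * m - n)
    rw [hAB] at hpump
    have := hnil A B (fun i => perExt m (fun i => F (z i)) ((n * m - n) + i))
    rw [hpump] at this
    exact c.eq.mp (WithOne.coe_inj.mp this)

theorem etaStar_le_of_nilpotent (c : Con S) (h : MalcevNilpotent c.Quotient) :
    etaStar S ≤ c := by
  refine Con.conGen_le.mpr fun x y hxy => ?_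
  induction hxy with
  | single h' => obtain ⟨n, -, hn⟩ := h'; exact con_of_etaN c h hn
  | tail _ h' ih => obtain ⟨n, -, hn⟩ := h'; exact c.trans ih (con_of_etaN c h hn)

theorem etaStar_of_eta {x y : S} (h : eta S x y) : etaStar S x y := by
  induction h with
  | single h' => exact ConGen.Rel.of _ _ (Relation.TransGen.single h')
  | tail _ h' ih =>
      exact (etaStar S).trans ih (ConGen.Rel.of _ _ (Relation.TransGen.single h'))

end EtaAux

section Triviality

variable {S : Type*} [Semigroup S] [Finite S]

/-- On `S/η*`, the relations `η_m` are trivial. -/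
theorem etaN_quotient_eq {m : ℕ} {u v : (etaStar S).Quotient}
    (h : etaN (etaStar S).Quotient m u v) : u = v := by
  classical
  rcases h with ⟨-, rfl⟩ | ⟨hm, W, hl, hr⟩
  · rfl
  obtain ⟨x, hx⟩ := Quotient.exists_rep u
  obtain ⟨y, hy⟩ := Quotient.exists_rep v
  have hxu : (x : (etaStar S).Quotient) = u := hx
  have hyv : (y : (etaStar S).Quotient) = v := hy
  set F := WithOne.mapMulHom (conMulHom (etaStar S)) with hFdef
  have hlift : ∀ w : WithOne (etaStar S).Quotient, ∃ z : WithOne S, F z = w := by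
    intro w
    induction w using WithOne.recOneCoe with
    | one => exact ⟨1, map_one F⟩
    | coe t =>
        obtain ⟨s, hs⟩ := Quotient.exists_rep t
        have hs' : (s : (etaStar S).Quotient) = t := hs
        exact ⟨(s : WithOne S), (WithOne.mapMulHom_coe _ _).trans (congrArg _ hs')⟩
  choose z hz using fun i => hlift (W i)
  set zp : ℕ → WithOne S := perExt m z with hzp
  have hFzp : ∀ i, F (zp i) = perExt m W i := fun i => hz _
  have hfixT : malcev (u : WithOne (etaStar S).Quotient)
      (v : WithOne (etaStar S).Quotient) W m
      = ((u : WithOne (etaStar S).Quotient), (v : WithOne (etaStar S).Quotient)) :=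
    Prod.ext_iff.mpr ⟨hl.symm, hr.symm⟩
  have hpumpT := malcev_perExt (u : WithOne (etaStar S).Quotient)
    (v : WithOne (etaStar S).Quotient) W m (by omega) hfixT
  have hrep : ∀ j : ℕ, ∃ p : S × S,
      malcev (x : WithOne S) (y : WithOne S) zp (j * m)
        = ((p.1 : WithOne S), (p.2 : WithOne S)) := by
    intro j
    obtain ⟨a', b', hab⟩ := malcev_coe x y zp (j * m)
    exact ⟨(a', b'), hab⟩
  choose p hp using hrep
  have hFx : F (x : WithOne S) = (u : WithOne (etaStar S).Quotient) :=
    (WithOne.mapMulHom_coe _ _).trans (congrArg _ hxu)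
  have hFy : F (y : WithOne S) = (v : WithOne (etaStar S).Quotient) :=
    (WithOne.mapMulHom_coe _ _).trans (congrArg _ hyv)
  have himg : ∀ j : ℕ, ((p j).1 : (etaStar S).Quotient) = u ∧
      ((p j).2 : (etaStar S).Quotient) = v := by
    intro j
    have hmap := malcev_map F (x : WithOne S) (y : WithOne S) zp (j * m)
    rw [hp j, hFx, hFy] at hmap
    have hfun : (fun i => F (zp i)) = perExt m W := funext hFzp
    rw [hfun, hpumpT j] at hmap
    have e1 : (u : WithOne (etaStar S).Quotient) = F ((p j).1 : WithOne S) :=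
      congrArg Prod.fst hmap
    have e2 : (v : WithOne (etaStar S).Quotient) = F ((p j).2 : WithOne S) :=
      congrArg Prod.snd hmap
    have c1 : F ((p j).1 : WithOne S)
        = (((p j).1 : (etaStar S).Quotient) : WithOne (etaStar S).Quotient) :=
      WithOne.mapMulHom_coe _ _
    have c2 : F ((p j).2 : WithOne S)
        = (((p j).2 : (etaStar S).Quotient) : WithOne (etaStar S).Quotient) :=
      WithOne.mapMulHom_coe _ _
    exact ⟨WithOne.coe_inj.mp (c1.symm.trans e1.symm),
           WithOne.coe_inj.mp (c2.symm.trans e2.symm)⟩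
  have key : ∀ j l : ℕ, j < l → p j = p l → etaStar S x y := by
    intro j l hjl heq
    set d := l - j with hd
    have hd1 : 1 ≤ d := by omega
    have hsplit : j * m + d * m = l * m := by
      rw [← Nat.add_mul]; congr 1; omega
    have e1 : (malcev (x : WithOne S) (y : WithOne S) zp (j * m)).1
        = ((p j).1 : WithOne S) := by rw [hp j]
    have e2 : (malcev (x : WithOne S) (y : WithOne S) zp (j * m)).2
        = ((p j).2 : WithOne S) := by rw [hp j]
    have hfix : malcev ((p j).1 : WithOne S) ((p j).2 : WithOne S)
        (fun i => zp (j * m + i)) (d * m)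
        = (((p j).1 : WithOne S), ((p j).2 : WithOne S)) := by
      have h3 : malcev (x : WithOne S) (y : WithOne S) zp (j * m + d * m)
          = malcev ((p j).1 : WithOne S) ((p j).2 : WithOne S)
            (fun i => zp (j * m + i)) (d * m) := by
        rw [malcev_add, e1, e2]
      rw [← h3, hsplit, hp l, heq]
    have hη : etaN S (d * m) (p j).1 (p j).2 :=
      Or.inr ⟨by nlinarith, fun i => zp (j * m + i), by rw [hfix], by rw [hfix]⟩
    have hcab : etaStar S (p j).1 (p j).2 :=
      etaStar_of_eta (Relation.TransGen.single ⟨d * m, by nlinarith, hη⟩)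
    have h1 : etaStar S x (p j).1 := (etaStar S).eq.mp (by rw [(himg j).1, hxu])
    have h2 : etaStar S (p j).2 y := (etaStar S).eq.mp (by rw [(himg j).2, hyv])
    exact (etaStar S).trans ((etaStar S).trans h1 hcab) h2
  obtain ⟨j, l, hne, heq⟩ :=
    Finite.exists_ne_map_eq_of_infinite (fun j : ℕ => p j)
  have hcxy : etaStar S x y := by
    rcases hne.lt_or_gt with hlt | hlt
    · exact key j l hlt heq
    · exact key l j hlt heq.symm
  rw [← hxu, ← hyv]
  exact (etaStar S).eq.mpr hcxy

/-- `S/η*` is Mal'cev nilpotent for finite `S`. -/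
theorem malcevNilpotent_etaStar_quotient :
    MalcevNilpotent (etaStar S).Quotient := by
  classical
  set T := (etaStar S).Quotient with hT
  have hfin : Finite T := Quotient.finite _
  have := Fintype.ofFinite (T × T)
  refine ⟨Fintype.card (T × T) + 1, Nat.succ_pos _, ?_⟩
  intro a b w
  have hrep : ∀ j : ℕ, ∃ q : T × T,
      malcev (a : WithOne T) (b : WithOne T) w j
        = ((q.1 : WithOne T), (q.2 : WithOne T)) := by
    intro j
    obtain ⟨a', b', hab⟩ := malcev_coe a b w j
    exact ⟨(a', b'), hab⟩
  choose q hq using hrep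
  have key : ∀ j l : ℕ, j < l → q j = q l → (q j).1 = (q j).2 := by
    intro j l hjl heq
    set d := l - j with hd
    have hd1 : 1 ≤ d := by omega
    have hjd : j + d = l := by omega
    have e1 : (malcev (a : WithOne T) (b : WithOne T) w j).1
        = ((q j).1 : WithOne T) := by rw [hq j]
    have e2 : (malcev (a : WithOne T) (b : WithOne T) w j).2
        = ((q j).2 : WithOne T) := by rw [hq j]
    have hfix : malcev ((q j).1 : WithOne T) ((q j).2 : WithOne T)
        (fun i => w (j + i)) d
        = (((q j).1 : WithOne T), ((q j).2 : WithOne T)) := by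
      have h3 : malcev (a : WithOne T) (b : WithOne T) w (j + d)
          = malcev ((q j).1 : WithOne T) ((q j).2 : WithOne T)
            (fun i => w (j + i)) d := by
        rw [malcev_add, e1, e2]
      rw [← h3, hjd, hq l, heq]
    have hpump := malcev_perExt _ _ _ d hd1 hfix 2
    have hη : etaN T (2 * d) (q j).1 (q j).2 :=
      Or.inr ⟨by omega, perExt d (fun i => w (j + i)), by rw [hpump], by rw [hpump]⟩
    exact etaN_quotient_eq hη
  obtain ⟨j, l, hne, heq⟩ := Fintype.exists_ne_map_eq_of_card_lt
    (fun j : Fin (Fintype.card (T × T) + 1) => q j)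
    (by simp)
  have heq1 : ∃ k : ℕ, k ≤ Fintype.card (T × T) ∧ (q k).1 = (q k).2 := by
    rcases (Fin.val_ne_of_ne hne).lt_or_gt with hlt | hlt
    · exact ⟨j, by omega, key j l hlt heq⟩
    · exact ⟨l, by omega, key l j hlt heq.symm⟩
  obtain ⟨k, hk, hqk⟩ := heq1
  refine malcev_eq_propagate (a : WithOne T) (b : WithOne T) w
    (k := k) (k' := Fintype.card (T × T) + 1) (by omega) ?_
  rw [hq k]
  exact congrArg _ hqk

end Triviality

/-- If `ρ` is a congruence on a finite semigroup `S` with `S/ρ`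
Mal'cev nilpotent, then `η* ⊆ ρ`; consequently `η*` is the least congruence
whose quotient is Mal'cev nilpotent. -/
theorem etaStar_le_of_malcevNilpotent_quotient (S : Type*) [Semigroup S] [Finite S]
    (ρ : Con S) (h : MalcevNilpotent ρ.Quotient) :
    etaStar S ≤ ρ ∧
      IsLeast {c : Con S | MalcevNilpotent c.Quotient} (etaStar S) := by
  exact ⟨etaStar_le_of_nilpotent ρ h,
    malcevNilpotent_etaStar_quotient,
    fun c hc => etaStar_le_of_nilpotent c hc⟩
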